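/- arXiv:1711.03581 — 4 statements merged into one kernel-verified Lean document; each statement's English description precedes it below -/
import Mathlib

section
/- For every \alpha \in (0,1], -\alpha\log\alpha - (1-\alpha)\log(1-\alpha) < \frac{(0.81)^2}{2\alpha^2} (where the entropy term is understood as 0 at \alpha = 1). -/
open Real Set

/-- `log(1+u) - log(1-u) ≥ 2u + (2/3)u³ + (2/5)u⁵ + (1/7)u⁷` on `[0,1)`. -/
lemma aux_log_ratio_ge : ∀ u ∈ Set.Ico (0:ℝ) 1,
    2*u + 2/3*u^3 + 2/5*u^5 + 1/7*u^7 ≤ Real.log (1+u) - Real.log (1-u) := by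
  set G : ℝ → ℝ := fun u => Real.log (1+u) - Real.log (1-u)
      - (2*u + 2/3*u^3 + 2/5*u^5 + 1/7*u^7) with hG
  have hmono : MonotoneOn G (Set.Ico (0:ℝ) 1) := by
    apply monotoneOn_of_hasDerivWithinAt_nonneg (convex_Ico 0 1)
      (f' := fun x => 1/(1+x) + 1/(1-x) - (2 + 2*x^2 + 2*x^4 + x^6))
    · have c1 : ContinuousOn (fun u : ℝ => Real.log (1+u)) (Set.Ico (0:ℝ) 1) := by
        apply ContinuousOn.log (continuousOn_const.add continuousOn_id)
        intro x hx
        simp only [mem_Ico] at hx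
        have : (0:ℝ) < 1 + x := by linarith [hx.1]
        exact ne_of_gt this
      have c2 : ContinuousOn (fun u : ℝ => Real.log (1-u)) (Set.Ico (0:ℝ) 1) := by
        apply ContinuousOn.log (continuousOn_const.sub continuousOn_id)
        intro x hx
        simp only [mem_Ico] at hx
        have : (0:ℝ) < 1 - x := by linarith [hx.2]
        exact ne_of_gt this
      exact (c1.sub c2).sub (Continuous.continuousOn (by fun_prop))
    · intro x hx
      rw [interior_Ico] at hx
      obtain ⟨hx0, hx1⟩ := hx
      have h1p : (0:ℝ) < 1 + x := by linarith
      have h1m : (0:ℝ) < 1 - x := by linarith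
      have d1 : HasDerivAt (fun u : ℝ => Real.log (1+u)) (1/(1+x)) x := by
        have h := (((hasDerivAt_id x).const_add 1).log (ne_of_gt h1p))
        simpa using h
      have d2 : HasDerivAt (fun u : ℝ => Real.log (1-u)) (-(1/(1-x))) x := by
        have h := (((hasDerivAt_id x).const_sub 1).log (ne_of_gt h1m))
        have h2 : HasDerivAt (fun u : ℝ => Real.log (1-u)) (-1/(1-x)) x := by
          simpa using h
        convert h2 using 1; ring
      have d3 : HasDerivAt (fun u : ℝ => 2*u + 2/3*u^3 + 2/5*u^5 + 1/7*u^7)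
          (2 + 2*x^2 + 2*x^4 + x^6) x := by
        have h := ((((hasDerivAt_id x).const_mul 2).add
            ((hasDerivAt_pow 3 x).const_mul (2/3:ℝ))).add
            ((hasDerivAt_pow 5 x).const_mul (2/5:ℝ))).add
            ((hasDerivAt_pow 7 x).const_mul (1/7:ℝ))
        refine h.congr_deriv ?_
        push_cast
        ring
      have d : HasDerivAt G (1/(1+x) + 1/(1-x) - (2 + 2*x^2 + 2*x^4 + x^6)) x := by
        have h := (d1.sub d2).sub d3
        refine h.congr_deriv ?_
        ring
      exact d.hasDerivWithinAt
    · intro x hx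
      rw [interior_Ico] at hx
      obtain ⟨hx0, hx1⟩ := hx
      have h1p : (0:ℝ) < 1 + x := by linarith
      have h1m : (0:ℝ) < 1 - x := by linarith
      have key : 1/(1+x) + 1/(1-x) - (2 + 2*x^2 + 2*x^4 + x^6)
          = (x^6 + x^8)/((1+x)*(1-x)) := by
        field_simp
        ring
      rw [key]
      positivity
  intro u hu
  have h0 : G 0 ≤ G u := hmono (by simp) hu hu.1
  have : G 0 = 0 := by simp [hG]
  rw [this] at h0
  simp only [hG] at h0
  linarith

/-- Truncated power series lower bound for
`(1+u)log(1+u) + (1-u)log(1-u)` on `[0,1)`. -/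
lemma aux_series_lb : ∀ u ∈ Set.Ico (0:ℝ) 1,
    u^2 + u^4/6 + u^6/15 + u^8/56 ≤ (1+u)*Real.log (1+u) + (1-u)*Real.log (1-u) := by
  set F : ℝ → ℝ := fun u => (1+u)*Real.log (1+u) + (1-u)*Real.log (1-u)
      - (u^2 + u^4/6 + u^6/15 + u^8/56) with hF
  have hmono : MonotoneOn F (Set.Ico (0:ℝ) 1) := by
    apply monotoneOn_of_hasDerivWithinAt_nonneg (convex_Ico 0 1)
      (f' := fun x => Real.log (1+x) - Real.log (1-x)
        - (2*x + 2/3*x^3 + 2/5*x^5 + 1/7*x^7))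
    · have c1 : ContinuousOn (fun u : ℝ => Real.log (1+u)) (Set.Ico (0:ℝ) 1) := by
        apply ContinuousOn.log (continuousOn_const.add continuousOn_id)
        intro x hx
        simp only [mem_Ico] at hx
        have : (0:ℝ) < 1 + x := by linarith [hx.1]
        exact ne_of_gt this
      have c2 : ContinuousOn (fun u : ℝ => Real.log (1-u)) (Set.Ico (0:ℝ) 1) := by
        apply ContinuousOn.log (continuousOn_const.sub continuousOn_id)
        intro x hx
        simp only [mem_Ico] at hx
        have : (0:ℝ) < 1 - x := by linarith [hx.2]
        exact ne_of_gt this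
      apply ContinuousOn.sub
      · exact (((continuousOn_const.add continuousOn_id).mul c1).add
          ((continuousOn_const.sub continuousOn_id).mul c2))
      · exact Continuous.continuousOn (by fun_prop)
    · intro x hx
      rw [interior_Ico] at hx
      obtain ⟨hx0, hx1⟩ := hx
      have h1p : (0:ℝ) < 1 + x := by linarith
      have h1m : (0:ℝ) < 1 - x := by linarith
      have d1 : HasDerivAt (fun u : ℝ => Real.log (1+u)) (1/(1+x)) x := by
        have h := (((hasDerivAt_id x).const_add 1).log (ne_of_gt h1p))
        simpa using h
      have d2 : HasDerivAt (fun u : ℝ => Real.log (1-u)) (-(1/(1-x))) x := by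
        have h := (((hasDerivAt_id x).const_sub 1).log (ne_of_gt h1m))
        have h2 : HasDerivAt (fun u : ℝ => Real.log (1-u)) (-1/(1-x)) x := by
          simpa using h
        convert h2 using 1; ring
      have e1 : HasDerivAt (fun u : ℝ => 1 + u) 1 x := by
        simpa using (hasDerivAt_id x).const_add 1
      have e2 : HasDerivAt (fun u : ℝ => 1 - u) (-1) x := by
        simpa using (hasDerivAt_id x).const_sub 1
      have m1 : HasDerivAt (fun u : ℝ => (1+u)*Real.log (1+u))
          (1 * Real.log (1+x) + (1+x) * (1/(1+x))) x := e1.mul d1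
      have m2 : HasDerivAt (fun u : ℝ => (1-u)*Real.log (1-u))
          ((-1) * Real.log (1-x) + (1-x) * (-(1/(1-x)))) x := e2.mul d2
      have d3 : HasDerivAt (fun u : ℝ => u^2 + u^4/6 + u^6/15 + u^8/56)
          (2*x + 2/3*x^3 + 2/5*x^5 + 1/7*x^7) x := by
        have h := (((hasDerivAt_pow 2 x).add
            ((hasDerivAt_pow 4 x).div_const 6)).add
            ((hasDerivAt_pow 6 x).div_const 15)).add
            ((hasDerivAt_pow 8 x).div_const 56)
        refine h.congr_deriv ?_
        push_cast
        ring
      have hxp : (1+x) * (1/(1+x)) = 1 := by field_simp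
      have hxm : (1-x) * (-(1/(1-x))) = -1 := by field_simp
      have d : HasDerivAt F (Real.log (1+x) - Real.log (1-x)
          - (2*x + 2/3*x^3 + 2/5*x^5 + 1/7*x^7)) x := by
        have h := (m1.add m2).sub d3
        refine h.congr_deriv ?_
        rw [hxp, hxm]
        ring
      exact d.hasDerivWithinAt
    · intro x hx
      rw [interior_Ico] at hx
      have h := aux_log_ratio_ge x ⟨hx.1.le, hx.2⟩
      linarith
  intro u hu
  have h0 : F 0 ≤ F u := hmono (by simp) hu hu.1
  have : F 0 = 0 := by simp [hF]
  rw [this] at h0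
  simp only [hF] at h0
  linarith

/-- For every `α ∈ (0,1]` the binary entropy satisfies
`I(α) < (0.81)²/(2α²)` (with `log 0 = 0`, so the entropy term is `0` at `α = 1`). -/
theorem entropy_lt_annealed_rate :
    ∀ α ∈ Set.Ioc (0 : ℝ) 1,
      -α * Real.log α - (1 - α) * Real.log (1 - α) < (0.81) ^ 2 / (2 * α ^ 2) := by
  intro α hα
  obtain ⟨hα0, hα1⟩ := hα
  have hlog2 : Real.log 2 < 0.6931471808 := Real.log_two_lt_d9
  rcases le_or_gt α (1/2) with hhalf | hhalf
  · -- easy case: entropy ≤ log 2 < 1.3122 ≤ RHS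
    have h1α : (0:ℝ) < 1 - α := by linarith
    -- log(2α) ≥ 1 - 1/(2α)
    have l1 : 1 - 1/(2*α) ≤ Real.log (2*α) := by
      have h := Real.log_le_sub_one_of_pos (show (0:ℝ) < (2*α)⁻¹ by positivity)
      rw [Real.log_inv] at h
      have : (2*α)⁻¹ = 1/(2*α) := by rw [one_div]
      linarith [h, this ▸ h]
    have l2 : 1 - 1/(2*(1-α)) ≤ Real.log (2*(1-α)) := by
      have h := Real.log_le_sub_one_of_pos (show (0:ℝ) < (2*(1-α))⁻¹ by positivity)
      rw [Real.log_inv, inv_eq_one_div] at h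
      linarith [h]
    have e1 : Real.log (2*α) = Real.log 2 + Real.log α :=
      Real.log_mul (by norm_num) (ne_of_gt hα0)
    have e2 : Real.log (2*(1-α)) = Real.log 2 + Real.log (1-α) :=
      Real.log_mul (by norm_num) (ne_of_gt h1α)
    have k1 : α - 1/2 ≤ α * Real.log (2*α) := by
      have := mul_le_mul_of_nonneg_left l1 hα0.le
      have hc : α * (1 - 1/(2*α)) = α - 1/2 := by field_simp
      linarith [hc ▸ this]
    have k2 : (1-α) - 1/2 ≤ (1-α) * Real.log (2*(1-α)) := by
      have := mul_le_mul_of_nonneg_left l2 h1α.le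
      have hc : (1-α) * (1 - 1/(2*(1-α))) = (1-α) - 1/2 := by field_simp
      linarith [hc ▸ this]
    have hent : -α * Real.log α - (1 - α) * Real.log (1 - α) ≤ Real.log 2 := by
      rw [e1] at k1; rw [e2] at k2; nlinarith
    have hRHS : (1.3122:ℝ) ≤ (0.81) ^ 2 / (2 * α ^ 2) := by
      rw [le_div_iff₀ (by positivity)]
      nlinarith
    linarith
  · -- main case: 1/2 < α ≤ 1
    rcases eq_or_lt_of_le hα1 with heq | hlt
    · subst heq
      simp only [Real.log_one, sub_self, zero_mul, mul_zero, neg_mul, one_mul]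
      norm_num
    · set u : ℝ := 2*α - 1 with hu
      have hu0 : 0 ≤ u := by simp only [hu]; linarith
      have hu1 : u < 1 := by simp only [hu]; linarith
      have hF := aux_series_lb u ⟨hu0, hu1⟩
      have h1α : (0:ℝ) < 1 - α := by linarith
      have e1 : Real.log (1+u) = Real.log 2 + Real.log α := by
        have : 1 + u = 2*α := by simp only [hu]; ring
        rw [this, Real.log_mul (by norm_num) (ne_of_gt hα0)]
      have e2 : Real.log (1-u) = Real.log 2 + Real.log (1-α) := by
        have : 1 - u = 2*(1-α) := by simp only [hu]; ring
        rw [this, Real.log_mul (by norm_num) (ne_of_gt h1α)]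
      -- entropy = log 2 - ((1+u)log(1+u)+(1-u)log(1-u))/2
      have hent : -α * Real.log α - (1 - α) * Real.log (1 - α)
          ≤ Real.log 2 - (u^2 + u^4/6 + u^6/15 + u^8/56)/2 := by
        have hid : (1+u)*Real.log (1+u) + (1-u)*Real.log (1-u)
            = 2*α*(Real.log 2 + Real.log α) + 2*(1-α)*(Real.log 2 + Real.log (1-α)) := by
          rw [e1, e2]; simp only [hu]; ring
        rw [hid] at hF
        nlinarith
      have hpoly : (0.6931471808 - (u^2 + u^4/6 + u^6/15 + u^8/56)/2)
          ≤ (0.81) ^ 2 / (2 * α ^ 2) := by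
        rw [le_div_iff₀ (by positivity)]
        have hα' : α = (1+u)/2 := by simp only [hu]; ring
        rw [hα']
        nlinarith [sq_nonneg (u - 0.577), sq_nonneg u, sq_nonneg (u*(u-0.577)),
          sq_nonneg (u^2*(u-0.577)), sq_nonneg (u^3*(u-0.577)), sq_nonneg (u^4*(u-0.577)),
          pow_nonneg hu0 3, pow_nonneg hu0 5, pow_nonneg hu0 7, pow_nonneg hu0 9]
      linarith
end

section
/- Let (J_{ij})_{1\le i,j\le N} be i.i.d. standard Gaussian random variables and H(\eta) = N^{-1/2}\sum_{i,j=1}^N J_{ij}\eta_i\eta_j for \eta\in\{0,1\}^N. Suppose m > 0 satisfies \sup_{\alpha\in(0,1]}\big( I(\alpha) - m^2/(2\alpha^2) \big) < 0, where I(\alpha) = -\alpha\log\alpha-(1-\alpha)\log(1-\alpha) (with I(1)=0). Then there exist c > 0 and N_0 such that for all N \ge N_0, P\big( \exists\, \eta \in \{0,1\}^N : H(\eta) < -mN \big) \le e^{-cN}. -/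
open MeasureTheory ProbabilityTheory Filter Finset
open scoped ENNReal NNReal

private lemma exp_mul_pdf' (t x : ℝ) :
    Real.exp (t * x) * gaussianPDFReal 0 1 x = Real.exp (t ^ 2 / 2) * gaussianPDFReal t 1 x := by
  simp only [gaussianPDFReal, NNReal.coe_one, mul_one, sub_zero]
  rw [mul_left_comm, mul_left_comm (Real.exp (t ^ 2 / 2))]
  congr 1
  rw [← Real.exp_add, ← Real.exp_add]
  congr 1
  ring

private lemma integral_exp_gaussian' (t : ℝ) :
    ∫ x, Real.exp (t * x) ∂(gaussianReal 0 1) = Real.exp (t ^ 2 / 2) := by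
  rw [gaussianReal_of_var_ne_zero 0 one_ne_zero]
  rw [show gaussianPDF 0 1 = fun x => ((Real.toNNReal (gaussianPDFReal 0 1 x) : ℝ≥0) : ℝ≥0∞) from rfl]
  rw [integral_withDensity_eq_integral_smul (measurable_gaussianPDFReal 0 1).real_toNNReal]
  have h : ∀ x, (Real.toNNReal (gaussianPDFReal 0 1 x) : ℝ≥0) • Real.exp (t * x)
      = Real.exp (t ^ 2 / 2) * gaussianPDFReal t 1 x := by
    intro x
    rw [NNReal.smul_def, smul_eq_mul, Real.coe_toNNReal _ (gaussianPDFReal_nonneg 0 1 x),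
      mul_comm (gaussianPDFReal 0 1 x), exp_mul_pdf']
  simp_rw [h]
  rw [MeasureTheory.integral_const_mul, integral_gaussianPDFReal_eq_one t one_ne_zero, mul_one]

private lemma integrable_exp_gaussian' (t : ℝ) :
    Integrable (fun x => Real.exp (t * x)) (gaussianReal 0 1) := by
  rw [gaussianReal_of_var_ne_zero 0 one_ne_zero]
  rw [show gaussianPDF 0 1 = fun x => ((Real.toNNReal (gaussianPDFReal 0 1 x) : ℝ≥0) : ℝ≥0∞) from rfl]
  rw [integrable_withDensity_iff_integrable_smul (measurable_gaussianPDFReal 0 1).real_toNNReal]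
  apply (((integrable_gaussianPDFReal t 1)).const_mul (Real.exp (t ^ 2 / 2))).congr
  filter_upwards with x
  rw [NNReal.smul_def, smul_eq_mul, Real.coe_toNNReal _ (gaussianPDFReal_nonneg 0 1 x),
    mul_comm (gaussianPDFReal 0 1 x), exp_mul_pdf']

private lemma integrable_exp_mul_of_gaussian' {Ω : Type} [MeasurableSpace Ω] {P : Measure Ω}
    {X : Ω → ℝ} (hX : Measurable X)
    (hmap : Measure.map X P = gaussianReal 0 1) (t : ℝ) :
    Integrable (fun ω => Real.exp (t * X ω)) P := by
  have h0 : Integrable (fun x => Real.exp (t * x)) (Measure.map X P) := by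
    rw [hmap]; exact integrable_exp_gaussian' t
  exact (integrable_map_measure h0.aestronglyMeasurable hX.aemeasurable).mp h0

private lemma mgf_of_gaussian' {Ω : Type} [MeasurableSpace Ω] {P : Measure Ω}
    {X : Ω → ℝ} (hX : Measurable X)
    (hmap : Measure.map X P = gaussianReal 0 1) (t : ℝ) :
    mgf X P t = Real.exp (t ^ 2 / 2) := by
  have hg : AEStronglyMeasurable (fun x => Real.exp (t * x)) (Measure.map X P) :=
    (Real.continuous_exp.comp (continuous_const.mul continuous_id)).aestronglyMeasurable
  have h := integral_map hX.aemeasurable hg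
  rw [mgf, ← h, hmap, integral_exp_gaussian']

private lemma tail_bound' {Ω : Type} [MeasurableSpace Ω] {P : Measure Ω}
    {ι : Type*} (J : ι → Ω → ℝ) [IsProbabilityMeasure P]
    (hmeas : ∀ p, Measurable (J p))
    (hind : iIndepFun J P)
    (hmap : ∀ p, Measure.map (J p) P = gaussianReal 0 1)
    (s : Finset ι) (hs : 0 < s.card) {a : ℝ} (ha : 0 ≤ a) :
    (P {ω | (∑ p ∈ s, J p ω) ≤ -a}).toReal ≤ Real.exp (-(a ^ 2) / (2 * s.card)) := by
  set k : ℝ := (s.card : ℝ) with hk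
  have hk0 : 0 < k := by rw [hk]; exact_mod_cast hs
  set t : ℝ := -(a / k) with htdef
  have ht : t ≤ 0 := neg_nonpos.mpr (div_nonneg ha hk0.le)
  have hint : ∀ p ∈ s, Integrable (fun ω => Real.exp (t * J p ω)) P := fun p _ =>
    integrable_exp_mul_of_gaussian' (hmeas p) (hmap p) t
  have hintS := hind.integrable_exp_mul_sum hmeas hint
  have hb := measure_le_le_exp_mul_mgf (μ := P) (X := ∑ p ∈ s, J p) (-a) ht hintS
  have hset : {ω | (∑ p ∈ s, J p ω) ≤ -a} = {ω | (∑ p ∈ s, J p) ω ≤ -a} := by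
    simp [Finset.sum_apply]
  rw [hset]
  refine hb.trans ?_
  rw [hind.mgf_sum hmeas]
  have hm : ∀ p ∈ s, mgf (J p) P t = Real.exp (t ^ 2 / 2) := fun p _ =>
    mgf_of_gaussian' (hmeas p) (hmap p) t
  rw [Finset.prod_congr rfl hm, Finset.prod_const, ← Real.exp_nat_mul, ← Real.exp_add]
  apply le_of_eq
  congr 1
  rw [htdef]
  field_simp
  ring

private lemma choose_le_exp_ent' (N k : ℕ) (hkN : k ≤ N) (hN : 0 < N) :
    (N.choose k : ℝ) ≤
      Real.exp (N * (-((k : ℝ)/N) * Real.log ((k : ℝ)/N)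
        - (1 - (k : ℝ)/N) * Real.log (1 - (k : ℝ)/N))) := by
  have hNR : (0 : ℝ) < N := by exact_mod_cast hN
  set α : ℝ := (k : ℝ) / N with hα
  have hα0 : 0 ≤ α := by positivity
  have hα1 : α ≤ 1 := by rw [hα, div_le_one hNR]; exact_mod_cast hkN
  have hsum : ∑ j ∈ range (N + 1), α ^ j * (1 - α) ^ (N - j) * (N.choose j : ℝ) = 1 := by
    rw [← add_pow]; norm_num
  have hnn : (0:ℝ) ≤ 1 - α := by linarith
  have hterm : α ^ k * (1 - α) ^ (N - k) * (N.choose k : ℝ) ≤ 1 := by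
    have h := Finset.single_le_sum (f := fun j => α ^ j * (1 - α) ^ (N - j) * (N.choose j : ℝ))
      (fun j _ => by positivity) (mem_range.mpr (Nat.lt_succ_of_le hkN))
    exact le_of_le_of_eq h hsum
  have hprod : α ^ k * (1 - α) ^ (N - k)
      = Real.exp ((k : ℝ) * Real.log α + ((N - k : ℕ) : ℝ) * Real.log (1 - α)) := by
    rw [Real.exp_add, Real.exp_nat_mul, Real.exp_nat_mul]
    congr 1
    · rcases Nat.eq_zero_or_pos k with h | h
      · simp [h]
      · have hαpos : 0 < α := by
          rw [hα]; exact div_pos (by exact_mod_cast h) hNR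
        rw [Real.exp_log hαpos]
    · rcases eq_or_lt_of_le hkN with h | h
      · simp [h]
      · have hlt : α < 1 := by rw [hα, div_lt_one hNR]; exact_mod_cast h
        rw [Real.exp_log (by linarith)]
  have hpos : 0 < α ^ k * (1 - α) ^ (N - k) := by rw [hprod]; exact Real.exp_pos _
  have h2 : (N.choose k : ℝ) ≤ 1 / (α ^ k * (1 - α) ^ (N - k)) := by
    rw [le_div_iff₀ hpos]
    linarith [hterm]
  refine h2.trans (le_of_eq ?_)
  rw [hprod, one_div, ← Real.exp_neg]
  congr 1
  have h1 : (N : ℝ) * α = k := by rw [hα]; field_simp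
  have h2' : ((N - k : ℕ) : ℝ) = (N : ℝ) - k := by
    push_cast [Nat.cast_sub hkN]; ring
  rw [h2', ← h1]
  ring

private def boolFinsetEquiv' (N : ℕ) : (Fin N → Bool) ≃ Finset (Fin N) where
  toFun η := Finset.univ.filter (fun i => η i = true)
  invFun S := fun i => decide (i ∈ S)
  left_inv η := by
    funext i
    by_cases h : η i = true <;> simp [h]
  right_inv S := by
    ext i
    simp

private lemma sum_bool_card' (N : ℕ) (g : ℕ → ℝ) :
    ∑ η : Fin N → Bool, g ((Finset.univ.filter (fun i => η i = true)).card) =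
      ∑ j ∈ range (N + 1), (N.choose j : ℝ) * g j := by
  refine (Fintype.sum_equiv (boolFinsetEquiv' N) _ (fun S => g S.card) (fun η => rfl)).trans ?_
  rw [show (Finset.univ : Finset (Finset (Fin N))) = (Finset.univ : Finset (Fin N)).powerset from
    (Finset.powerset_univ).symm]
  rw [Finset.sum_powerset]
  rw [show #(Finset.univ : Finset (Fin N)) = N from by simp]
  refine Finset.sum_congr rfl fun j hj => ?_
  rw [Finset.sum_congr rfl (fun S hS => by rw [(Finset.mem_powersetCard.mp hS).2]),
    Finset.sum_const, Finset.card_powersetCard]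
  simp [mul_comm]

/-- First-moment bound: if `sup_{α ∈ (0,1]}(I(α) - m²/(2α²)) < 0`, then
the probability that some configuration has energy below `-mN` is exponentially small in `N`. -/
theorem no_low_energy_configs_annealed
    (m : ℝ) (hm : 0 < m)
    (I : ℝ → ℝ) (hI : ∀ α, I α = -α * Real.log α - (1 - α) * Real.log (1 - α))
    (hsup : sSup ((fun α => I α - m ^ 2 / (2 * α ^ 2)) '' Set.Ioc (0 : ℝ) 1) < 0) :
    ∃ c : ℝ, 0 < c ∧ ∃ N₀ : ℕ, ∀ N ≥ N₀,
      ∀ (Ω : Type) (_ : MeasurableSpace Ω) (P : Measure Ω), IsProbabilityMeasure P →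
      ∀ (J : Fin N × Fin N → Ω → ℝ),
        (∀ p, Measurable (J p)) →
        iIndepFun J P →
        (∀ p, Measure.map (J p) P = gaussianReal 0 1) →
        ∀ (H : Ω → (Fin N → Bool) → ℝ),
          (∀ ω η, H ω η = (1 / Real.sqrt N) * ∑ i, ∑ j, J (i, j) ω *
              (if η i then (1 : ℝ) else 0) * (if η j then (1 : ℝ) else 0)) →
          P {ω | ∃ η : Fin N → Bool, H ω η < -(m * N)} ≤
            ENNReal.ofReal (Real.exp (-c * N)) := by
  classical
  have hbdd : BddAbove ((fun α => I α - m ^ 2 / (2 * α ^ 2)) '' Set.Ioc (0 : ℝ) 1) := by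
    by_contra h
    rw [csSup_of_not_bddAbove h, Real.sSup_empty] at hsup
    exact lt_irrefl 0 hsup
  set s0 : ℝ := sSup ((fun α => I α - m ^ 2 / (2 * α ^ 2)) '' Set.Ioc (0 : ℝ) 1) with hs0def
  have hs0 : s0 < 0 := hsup
  have hkey : ∀ α ∈ Set.Ioc (0:ℝ) 1, I α - m ^ 2 / (2 * α ^ 2) ≤ s0 :=
    fun α hα => le_csSup hbdd ⟨α, hα, rfl⟩
  have hc : 0 < -s0 / 2 := by linarith
  refine ⟨-s0 / 2, hc, ⌈(4:ℝ) / (-s0 / 2) ^ 2⌉₊ + 1, ?_⟩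
  intro N hN Ω mΩ P hP J hJm hJind hJmap H hH
  set c : ℝ := -s0 / 2 with hcdef
  have hN1 : 1 ≤ N := le_trans (Nat.le_add_left 1 _) hN
  have hNR : (0:ℝ) < N := by exact_mod_cast hN1
  have hgrow : (N : ℝ) ≤ Real.exp (c * N) := by
    have h4 : (4:ℝ) / c ^ 2 ≤ N := by
      refine (Nat.le_ceil _).trans ?_
      exact_mod_cast Nat.le_of_succ_le hN
    have h5 : 4 ≤ c ^ 2 * N := by
      rw [div_le_iff₀ (by positivity)] at h4
      linarith [h4]
    have e1 : c * N / 2 + 1 ≤ Real.exp (c * N / 2) := Real.add_one_le_exp _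
    have e2 : Real.exp (c * N) = Real.exp (c * N / 2) ^ 2 := by
      rw [sq, ← Real.exp_add]; ring_nf
    have hnn : 0 ≤ c * N / 2 := by positivity
    nlinarith [e1, e2, h5, hnn, Real.exp_pos (c * N / 2)]
  have hsqrtN : 0 < Real.sqrt N := Real.sqrt_pos.mpr hNR
  set F : (Fin N → Bool) → Finset (Fin N) :=
    fun η => Finset.univ.filter (fun i => η i = true) with hF
  set A : (Fin N → Bool) → Set Ω := fun η => {ω | H ω η < -(m * N)} with hA
  have hHsum : ∀ ω η, H ω η = (1 / Real.sqrt N) * ∑ p ∈ (F η) ×ˢ (F η), J p ω := by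
    intro ω η
    rw [hH]
    congr 1
    rw [Finset.sum_product, Finset.sum_filter]
    refine Finset.sum_congr rfl fun i _ => ?_
    by_cases hi : η i = true
    · simp only [hi, if_true]
      rw [Finset.sum_filter]
      refine Finset.sum_congr rfl fun j _ => ?_
      by_cases hj : η j = true <;> simp [hj, hi]
    · simp [hi]
  have hAsub : ∀ η, A η ⊆ {ω | (∑ p ∈ (F η) ×ˢ (F η), J p ω) ≤ -(m * N * Real.sqrt N)} := by
    intro η ω hω
    simp only [hA, Set.mem_setOf_eq] at hω ⊢
    rw [hHsum] at hω
    have h2 := (mul_lt_mul_iff_right₀ hsqrtN).mpr hω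
    rw [← mul_assoc, mul_one_div, div_self (ne_of_gt hsqrtN), one_mul] at h2
    have h3 : Real.sqrt N * -(m * N) = -(m * N * Real.sqrt N) := by ring
    linarith [h2, h3.le]
  have hFcard : ∀ η, (F η).card ≤ N := fun η => by
    simpa using Finset.card_filter_le Finset.univ (fun i => η i = true)
  have hAzero : ∀ η, (F η).card = 0 → A η = ∅ := by
    intro η h0
    have hFe : F η = ∅ := Finset.card_eq_zero.mp h0
    ext ω
    simp only [hA, Set.mem_setOf_eq, Set.mem_empty_iff_false, iff_false, not_lt]
    rw [hHsum, hFe]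
    simp only [Finset.empty_product, Finset.sum_empty, mul_zero]
    linarith [mul_pos hm hNR]
  set g : ℕ → ℝ := fun j => if j = 0 then 0 else Real.exp (N * s0) / (N.choose j) with hg
  have hgnn : ∀ j, 0 ≤ g j := by
    intro j
    rw [hg]
    dsimp only
    split
    · exact le_rfl
    · positivity
  set bnd : (Fin N → Bool) → ℝ := fun η => g ((F η).card) with hbnd
  have hmain : ∀ η, P (A η) ≤ ENNReal.ofReal (bnd η) := by
    intro η
    rcases Nat.eq_zero_or_pos (F η).card with h0 | hpos
    · rw [hAzero η h0]
      simp
    · have hkN : (F η).card ≤ N := hFcard η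
      have hchoosepos : 0 < (N.choose (F η).card : ℝ) := by
        exact_mod_cast Nat.choose_pos hkN
      rw [ENNReal.le_ofReal_iff_toReal_le (measure_ne_top P _) (hgnn _)]
      have step1 : (P (A η)).toReal ≤
          (P {ω | (∑ p ∈ (F η) ×ˢ (F η), J p ω) ≤ -(m * N * Real.sqrt N)}).toReal :=
        ENNReal.toReal_mono (measure_ne_top P _) (measure_mono (hAsub η))
      have hcard : ((F η) ×ˢ (F η)).card = (F η).card * (F η).card := Finset.card_product _ _
      have step2 := tail_bound' J hJm hJind hJmap ((F η) ×ˢ (F η))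
        (by rw [hcard]; positivity) (a := m * N * Real.sqrt N) (by positivity)
      refine (step1.trans step2).trans ?_
      set α : ℝ := ((F η).card : ℝ) / N with hαdef
      have hαIoc : α ∈ Set.Ioc (0:ℝ) 1 :=
        ⟨div_pos (by exact_mod_cast hpos) hNR, by rw [hαdef, div_le_one hNR]; exact_mod_cast hkN⟩
      have hEeq : -((m * N * Real.sqrt N) ^ 2) / (2 * (((F η) ×ˢ (F η)).card : ℝ))
          = N * (-(m ^ 2) / (2 * α ^ 2)) := by
        rw [hcard, hαdef]
        push_cast
        rw [mul_pow, mul_pow, Real.sq_sqrt hNR.le]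
        have hk0 : (0:ℝ) < ((F η).card : ℝ) := by exact_mod_cast hpos
        field_simp
      rw [hEeq]
      have hch := choose_le_exp_ent' N (F η).card hkN (by omega)
      rw [← hαdef] at hch
      have hlog : Real.log (N.choose (F η).card) ≤ N * I α := by
        rw [hI, Real.log_le_iff_le_exp hchoosepos]
        exact hch
      have hkey' := hkey α hαIoc
      have h8 : (N:ℝ) * (-(m ^ 2) / (2 * α ^ 2)) ≤ N * (s0 - I α) :=
        mul_le_mul_of_nonneg_left (by rw [neg_div]; linarith [hkey']) hNR.le
      rw [mul_sub] at h8
      have h6 : (N:ℝ) * (-(m ^ 2) / (2 * α ^ 2)) ≤ N * s0 - Real.log (N.choose (F η).card) := by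
        linarith [hlog]
      have hbndval : g (F η).card = Real.exp (N * s0) / (N.choose (F η).card) := by
        simp only [hg]
        simp only [Nat.pos_iff_ne_zero.mp hpos, if_false]
      rw [hbndval]
      calc Real.exp (N * (-(m ^ 2) / (2 * α ^ 2)))
          ≤ Real.exp (N * s0 - Real.log (N.choose (F η).card)) := Real.exp_le_exp.mpr h6
        _ = Real.exp (N * s0) / (N.choose (F η).card) := by
            rw [Real.exp_sub, Real.exp_log hchoosepos]
  have hEset : {ω | ∃ η : Fin N → Bool, H ω η < -(m * N)} = ⋃ η, A η := by
    ext ω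
    simp only [hA, Set.mem_setOf_eq, Set.mem_iUnion]
  rw [hEset]
  have hsum1 : ∑ η : Fin N → Bool, bnd η = N * Real.exp (N * s0) := by
    rw [hbnd]
    rw [sum_bool_card' N g]
    rw [Finset.sum_range_succ']
    have hterm : ∀ j ∈ Finset.range N, (N.choose (j+1) : ℝ) * g (j+1) = Real.exp (N * s0) := by
      intro j hj
      have hj' : j + 1 ≤ N := Finset.mem_range.mp hj
      have hcne : (N.choose (j+1) : ℝ) ≠ 0 := by
        exact_mod_cast (Nat.choose_pos hj').ne'
      rw [hg]
      simp only [Nat.succ_ne_zero, if_false]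
      field_simp
    rw [Finset.sum_congr rfl hterm, Finset.sum_const, Finset.card_range]
    rw [hg]
    simp [nsmul_eq_mul]
  calc P (⋃ η, A η) ≤ ∑ η : Fin N → Bool, P (A η) := measure_iUnion_fintype_le P A
    _ ≤ ∑ η : Fin N → Bool, ENNReal.ofReal (bnd η) := Finset.sum_le_sum fun η _ => hmain η
    _ = ENNReal.ofReal (∑ η : Fin N → Bool, bnd η) :=
        (ENNReal.ofReal_sum_of_nonneg fun η _ => (hgnn _ : 0 ≤ bnd η)).symm
    _ ≤ ENNReal.ofReal (Real.exp (-c * N)) := by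
        apply ENNReal.ofReal_le_ofReal
        rw [hsum1]
        have hstep : (N:ℝ) * Real.exp (N * s0) ≤ Real.exp (c * N) * Real.exp (N * s0) :=
          mul_le_mul_of_nonneg_right hgrow (Real.exp_pos _).le
        refine hstep.trans (le_of_eq ?_)
        rw [← Real.exp_add]
        congr 1
        rw [hcdef]
        ring
end

section
/- Fix \alpha \in (0,1), m > 0 and \gamma \in (0, 1/2). For each N let X_N and Y_N be independent centered Gaussian random variables with variances \alpha^2 N and (1-\alpha^2)N respectively. Then \lim_{N\to\infty} \frac{1}{N} \log P\big( X_N < -mN,\ |X_N + Y_N| \le N^{1/2+\gamma} \big) = -\frac{m^2}{2\alpha^2(1-\alpha^2)}. -/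
open MeasureTheory ProbabilityTheory Filter Set
open scoped NNReal

lemma gauss_tail_Ioi {w : ℝ} (hw : 0 < w) {t : ℝ} (ht : 0 ≤ t) :
    gaussianReal 0 w.toNNReal (Set.Ioi t) ≤ ENNReal.ofReal (Real.exp (-t^2/(2*w))) := by
  have hv : w.toNNReal ≠ 0 := by
    simp [Real.toNNReal_eq_zero, not_le, hw]
  have hco : ((w.toNNReal : ℝ)) = w := Real.coe_toNNReal _ hw.le
  rw [gaussianReal_apply_eq_integral 0 hv]
  refine ENNReal.ofReal_le_ofReal ?_
  have hpt : ∀ x ∈ Set.Ioi t, gaussianPDFReal 0 w.toNNReal x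
      ≤ Real.exp (-t^2/(2*w)) * gaussianPDFReal t w.toNNReal x := by
    intro x hx
    simp only [gaussianPDFReal, hco, sub_zero]
    rw [mul_left_comm]
    refine mul_le_mul_of_nonneg_left ?_ (by positivity)
    rw [← Real.exp_add, Real.exp_le_exp]
    have hx' : t < x := hx
    rw [← add_div, div_le_div_iff₀ (by linarith) (by linarith)]
    nlinarith [sq_nonneg (x - t), mul_nonneg (mul_nonneg ht (sub_nonneg.mpr hx'.le)) hw.le]
  calc ∫ x in Set.Ioi t, gaussianPDFReal 0 w.toNNReal x
      ≤ ∫ x in Set.Ioi t, Real.exp (-t^2/(2*w)) * gaussianPDFReal t w.toNNReal x := by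
        refine setIntegral_mono_on (integrable_gaussianPDFReal _ _).restrict
          ((integrable_gaussianPDFReal _ _).restrict.const_mul _) measurableSet_Ioi hpt
    _ = Real.exp (-t^2/(2*w)) * ∫ x in Set.Ioi t, gaussianPDFReal t w.toNNReal x := by
        rw [integral_const_mul]
    _ ≤ Real.exp (-t^2/(2*w)) * 1 := by
        refine mul_le_mul_of_nonneg_left ?_ (Real.exp_nonneg _)
        rw [← integral_gaussianPDFReal_eq_one t hv]
        exact setIntegral_le_integral (integrable_gaussianPDFReal _ _)
          (ae_of_all _ (gaussianPDFReal_nonneg _ _))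
    _ = Real.exp (-t^2/(2*w)) := mul_one _

lemma gauss_tail_Iio {w : ℝ} (hw : 0 < w) {t : ℝ} (ht : 0 ≤ t) :
    gaussianReal 0 w.toNNReal (Set.Iio (-t)) ≤ ENNReal.ofReal (Real.exp (-t^2/(2*w))) := by
  have hv : w.toNNReal ≠ 0 := by
    simp [Real.toNNReal_eq_zero, not_le, hw]
  have hco : ((w.toNNReal : ℝ)) = w := Real.coe_toNNReal _ hw.le
  rw [gaussianReal_apply_eq_integral 0 hv]
  refine ENNReal.ofReal_le_ofReal ?_
  have hpt : ∀ x ∈ Set.Iio (-t), gaussianPDFReal 0 w.toNNReal x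
      ≤ Real.exp (-t^2/(2*w)) * gaussianPDFReal (-t) w.toNNReal x := by
    intro x hx
    simp only [gaussianPDFReal, hco, sub_zero]
    rw [mul_left_comm]
    refine mul_le_mul_of_nonneg_left ?_ (by positivity)
    rw [← Real.exp_add, Real.exp_le_exp]
    have hx' : x < -t := hx
    rw [← add_div, div_le_div_iff₀ (by linarith) (by linarith)]
    nlinarith [sq_nonneg (x + t), mul_nonneg (mul_nonneg ht (sub_nonneg.mpr hx'.le)) hw.le]
  calc ∫ x in Set.Iio (-t), gaussianPDFReal 0 w.toNNReal x
      ≤ ∫ x in Set.Iio (-t), Real.exp (-t^2/(2*w)) * gaussianPDFReal (-t) w.toNNReal x := by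
        refine setIntegral_mono_on (integrable_gaussianPDFReal _ _).restrict
          ((integrable_gaussianPDFReal _ _).restrict.const_mul _) measurableSet_Iio hpt
    _ = Real.exp (-t^2/(2*w)) * ∫ x in Set.Iio (-t), gaussianPDFReal (-t) w.toNNReal x := by
        rw [integral_const_mul]
    _ ≤ Real.exp (-t^2/(2*w)) * 1 := by
        refine mul_le_mul_of_nonneg_left ?_ (Real.exp_nonneg _)
        rw [← integral_gaussianPDFReal_eq_one (-t) hv]
        exact setIntegral_le_integral (integrable_gaussianPDFReal _ _)
          (ae_of_all _ (gaussianPDFReal_nonneg _ _))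
    _ = Real.exp (-t^2/(2*w)) := mul_one _

lemma gauss_icc_lower {w : ℝ} (hw : 0 < w) {a b M : ℝ} (hab : a ≤ b)
    (hM : ∀ x ∈ Set.Icc a b, x^2 ≤ M) :
    ENNReal.ofReal ((b - a) * ((Real.sqrt (2*Real.pi*w))⁻¹ * Real.exp (-M/(2*w))))
      ≤ gaussianReal 0 w.toNNReal (Set.Icc a b) := by
  have hv : w.toNNReal ≠ 0 := by
    simp [Real.toNNReal_eq_zero, not_le, hw]
  have hco : ((w.toNNReal : ℝ)) = w := Real.coe_toNNReal _ hw.le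
  rw [gaussianReal_apply_eq_integral 0 hv]
  refine ENNReal.ofReal_le_ofReal ?_
  have h1 : (b - a) * ((Real.sqrt (2*Real.pi*w))⁻¹ * Real.exp (-M/(2*w)))
      = ∫ _ in Set.Icc a b, ((Real.sqrt (2*Real.pi*w))⁻¹ * Real.exp (-M/(2*w))) := by
    rw [setIntegral_const, Real.volume_real_Icc_of_le hab, smul_eq_mul]
  rw [h1]
  refine setIntegral_mono_on (integrable_const _)
    (integrable_gaussianPDFReal _ _).restrict measurableSet_Icc ?_
  intro x hx
  simp only [gaussianPDFReal, hco, sub_zero]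
  refine mul_le_mul_of_nonneg_left ?_ (by positivity)
  rw [Real.exp_le_exp]
  have := hM x hx
  have h2w : (0:ℝ) < 2*w := by linarith
  exact div_le_div_of_nonneg_right (by linarith) h2w.le |>.trans_eq rfl


lemma log_div_nat : Tendsto (fun N : ℕ => Real.log N / (N:ℝ)) atTop (nhds 0) :=
  (Real.isLittleO_log_id_atTop.tendsto_div_nhds_zero).comp tendsto_natCast_atTop_atTop

lemma one_div_nat : Tendsto (fun N : ℕ => 1 / (N:ℝ)) atTop (nhds 0) :=
  tendsto_one_div_atTop_nhds_zero_nat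

lemma lim_lower_piece (a b C : ℝ) (hb : 0 < b) (hC : 0 < C) :
    Tendsto (fun N : ℕ => (1/(N:ℝ)) * Real.log (C * ((Real.sqrt (2*Real.pi*(b*N)))⁻¹
        * Real.exp (-(a*N+1)^2/(2*(b*N)))))) atTop (nhds (-(a^2)/(2*b))) := by
  have hlim : Tendsto (fun N : ℕ => (1/(N:ℝ)) * Real.log C
      - (1/2) * ((1/(N:ℝ)) * Real.log (2*Real.pi*b)) - (1/2) * (Real.log N / (N:ℝ))
      - (a + 1/(N:ℝ))^2 / (2*b)) atTop (nhds (-(a^2)/(2*b))) := by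
    have h1 : Tendsto (fun N : ℕ => (1/(N:ℝ)) * Real.log C) atTop (nhds 0) := by
      simpa using one_div_nat.mul_const (Real.log C)
    have h2 : Tendsto (fun N : ℕ => (1/2) * ((1/(N:ℝ)) * Real.log (2*Real.pi*b)))
        atTop (nhds 0) := by
      simpa using (one_div_nat.mul_const (Real.log (2*Real.pi*b))).const_mul (1/2 : ℝ)
    have h3 : Tendsto (fun N : ℕ => (1/2) * (Real.log N / (N:ℝ))) atTop (nhds 0) := by
      simpa using log_div_nat.const_mul (1/2 : ℝ)
    have h4 : Tendsto (fun N : ℕ => (a + 1/(N:ℝ))^2 / (2*b)) atTop (nhds (a^2/(2*b))) := by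
      have := ((tendsto_const_nhds (x := a)).add one_div_nat).pow 2
      simpa using this.div_const (2*b)
    have h5 := ((h1.sub h2).sub h3).sub h4
    have : -(a^2)/(2*b) = 0 - 0 - 0 - a^2/(2*b) := by ring
    rw [this]; exact h5
  refine hlim.congr' ?_
  filter_upwards [eventually_ge_atTop 1] with N hN
  have hN0 : (0:ℝ) < N := by exact_mod_cast hN
  have hbN : 0 < b * N := by positivity
  have hs : (0:ℝ) < Real.sqrt (2*Real.pi*(b*N)) := Real.sqrt_pos.mpr (by positivity)
  rw [Real.log_mul hC.ne' (by positivity), Real.log_mul (by positivity) (Real.exp_ne_zero _),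
    Real.log_inv, Real.log_exp, Real.log_sqrt (by positivity),
    show 2*Real.pi*(b*(N:ℝ)) = (2*Real.pi*b)*N by ring,
    Real.log_mul (by positivity) hN0.ne']
  field_simp
  ring

lemma lim_upper_piece (a b1 b2 γ : ℝ) (hb1 : 0 < b1) (hb2 : 0 < b2)
    (hγ0 : 0 < γ) (hγ1 : γ < 1/2) :
    Tendsto (fun N : ℕ => (1/(N:ℝ)) * (-(a*N)^2/(2*(b1*N))
        + -(a*N - (N:ℝ)^((1:ℝ)/2+γ))^2/(2*(b2*N)))) atTop
      (nhds (-(a^2)/(2*b1) + -(a^2)/(2*b2))) := by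
  have hu : Tendsto (fun N : ℕ => (N:ℝ)^(γ - 1/2)) atTop (nhds 0) := by
    have h := (tendsto_rpow_neg_atTop (by linarith : (0:ℝ) < 1/2 - γ)).comp
      (tendsto_natCast_atTop_atTop (R := ℝ))
    refine h.congr (fun N => ?_)
    simp only [Function.comp]
    norm_num
  have hlim : Tendsto (fun N : ℕ => -(a^2)/(2*b1)
      + -(a - (N:ℝ)^(γ - 1/2))^2/(2*b2)) atTop (nhds (-(a^2)/(2*b1) + -(a^2)/(2*b2))) := by
    have h4 : Tendsto (fun N : ℕ => -(a - (N:ℝ)^(γ - 1/2))^2/(2*b2)) atTop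
        (nhds (-(a^2)/(2*b2))) := by
      have := (((tendsto_const_nhds (x := a)).sub hu).pow 2).neg.div_const (2*b2)
      simpa using this
    simpa using (tendsto_const_nhds (x := -(a^2)/(2*b1))).add h4
  refine hlim.congr' ?_
  filter_upwards [eventually_ge_atTop 1] with N hN
  have hN0 : (0:ℝ) < N := by exact_mod_cast hN
  have key : ((N:ℝ))^((1:ℝ)/2+γ) = (N:ℝ)^(γ - 1/2) * N := by
    rw [show (1:ℝ)/2+γ = (γ - 1/2) + 1 by ring, Real.rpow_add hN0, Real.rpow_one]
  rw [key]
  field_simp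


/-- Exponential rate of the joint Gaussian probability: if `X_N, Y_N` are
independent centered Gaussians with variances `α²N` and `(1-α²)N`, then
`(1/N) log P(X_N < -mN, |X_N + Y_N| ≤ N^{1/2+γ}) → -m²/(2α²(1-α²))`. -/
theorem conditioned_gaussian_log_rate
    (α m γ : ℝ) (hα : α ∈ Set.Ioo (0 : ℝ) 1) (hm : 0 < m) (hγ : γ ∈ Set.Ioo (0 : ℝ) (1 / 2))
    (Ω : Type) (_ : MeasurableSpace Ω) (P : Measure Ω) [IsProbabilityMeasure P]
    (X Y : ℕ → Ω → ℝ)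
    (hXmeas : ∀ N, Measurable (X N)) (hYmeas : ∀ N, Measurable (Y N))
    (hindep : ∀ N, IndepFun (X N) (Y N) P)
    (hX : ∀ N, Measure.map (X N) P = gaussianReal 0 (Real.toNNReal (α ^ 2 * N)))
    (hY : ∀ N, Measure.map (Y N) P = gaussianReal 0 (Real.toNNReal ((1 - α ^ 2) * N))) :
    Tendsto (fun N : ℕ => (1 / (N : ℝ)) * Real.log
        ((P {ω | X N ω < -(m * N) ∧ |X N ω + Y N ω| ≤ (N : ℝ) ^ ((1 : ℝ) / 2 + γ)}).toReal))
      atTop (nhds (-(m ^ 2) / (2 * α ^ 2 * (1 - α ^ 2)))) := by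
  obtain ⟨hα0, hα1⟩ := hα
  obtain ⟨hγ0, hγ1⟩ := hγ
  have hα2 : (0:ℝ) < α^2 := by positivity
  have h1α : (0:ℝ) < 1 - α^2 := by nlinarith
  -- probability as a product-measure evaluation
  have hprob : ∀ N : ℕ,
      P {ω | X N ω < -(m * N) ∧ |X N ω + Y N ω| ≤ (N : ℝ) ^ ((1 : ℝ) / 2 + γ)}
        = ((gaussianReal 0 (Real.toNNReal (α ^ 2 * N))).prod
            (gaussianReal 0 (Real.toNNReal ((1 - α ^ 2) * N))))
          {p : ℝ × ℝ | p.1 < -(m * N) ∧ |p.1 + p.2| ≤ (N : ℝ) ^ ((1 : ℝ) / 2 + γ)} := by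
    intro N
    have hSmeas : MeasurableSet
        {p : ℝ × ℝ | p.1 < -(m * (N:ℝ)) ∧ |p.1 + p.2| ≤ (N : ℝ) ^ ((1 : ℝ) / 2 + γ)} :=
      (measurableSet_lt measurable_fst measurable_const).inter
        (measurableSet_le (measurable_fst.add measurable_snd).abs measurable_const)
    have hmap := (ProbabilityTheory.indepFun_iff_map_prod_eq_prod_map_map
        (hXmeas N).aemeasurable (hYmeas N).aemeasurable).mp (hindep N)
    rw [← hX N, ← hY N, ← hmap,
      Measure.map_apply ((hXmeas N).prodMk (hYmeas N)) hSmeas]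
    rfl
  -- lower bound
  have hl1pos : ∀ N : ℕ, 1 ≤ N → 0 <
      ((1/2 : ℝ) * ((Real.sqrt (2*Real.pi*(α^2*(N:ℝ))))⁻¹
        * Real.exp (-(m*(N:ℝ)+1)^2/(2*(α^2*(N:ℝ))))))
      * ((1 : ℝ) * ((Real.sqrt (2*Real.pi*((1-α^2)*(N:ℝ))))⁻¹
        * Real.exp (-(m*(N:ℝ)+1)^2/(2*((1-α^2)*(N:ℝ)))))) := by
    intro N hN
    have hN0 : (0:ℝ) < N := by exact_mod_cast hN
    positivity
  have hlb : ∀ N : ℕ, 1 ≤ N →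
      ((1/2 : ℝ) * ((Real.sqrt (2*Real.pi*(α^2*(N:ℝ))))⁻¹
        * Real.exp (-(m*(N:ℝ)+1)^2/(2*(α^2*(N:ℝ))))))
      * ((1 : ℝ) * ((Real.sqrt (2*Real.pi*((1-α^2)*(N:ℝ))))⁻¹
        * Real.exp (-(m*(N:ℝ)+1)^2/(2*((1-α^2)*(N:ℝ))))))
      ≤ (P {ω | X N ω < -(m * N) ∧ |X N ω + Y N ω| ≤ (N : ℝ) ^ ((1 : ℝ) / 2 + γ)}).toReal := by
    intro N hN
    have hN0 : (0:ℝ) < N := by exact_mod_cast hN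
    have hN1 : (1:ℝ) ≤ N := by exact_mod_cast hN
    have hm0 : (0:ℝ) ≤ m * N := by positivity
    have hr1 : (1:ℝ) ≤ (N:ℝ) ^ ((1:ℝ)/2 + γ) := Real.one_le_rpow hN1 (by linarith)
    have h1 := gauss_icc_lower (w := α^2*(N:ℝ)) (by positivity)
        (a := -(m*(N:ℝ))-1) (b := -(m*(N:ℝ))-1/2) (M := (m*(N:ℝ)+1)^2)
        (by linarith) (by
          intro x hx
          exact sq_le_sq' (by linarith [hx.1]) (by linarith [hx.2]))
    have h2 := gauss_icc_lower (w := (1-α^2)*(N:ℝ)) (by positivity)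
        (a := m*(N:ℝ)) (b := m*(N:ℝ)+1) (M := (m*(N:ℝ)+1)^2)
        (by linarith) (by
          intro x hx
          exact sq_le_sq' (by linarith [hx.1]) (by linarith [hx.2]))
    rw [show (-(m*(N:ℝ))-1/2) - (-(m*(N:ℝ))-1) = 1/2 by ring] at h1
    rw [show (m*(N:ℝ)+1) - (m*(N:ℝ)) = 1 by ring] at h2
    have hrect : (Set.Icc (-(m*(N:ℝ))-1) (-(m*(N:ℝ))-1/2)) ×ˢ
        (Set.Icc (m*(N:ℝ)) (m*(N:ℝ)+1))
        ⊆ {p : ℝ × ℝ | p.1 < -(m*(N:ℝ)) ∧ |p.1+p.2| ≤ (N:ℝ)^((1:ℝ)/2+γ)} := by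
      rintro ⟨x, y⟩ ⟨⟨hx1, hx2⟩, hy1, hy2⟩
      refine ⟨by simpa using by linarith, ?_⟩
      rw [abs_le]
      constructor <;> simp only [Prod.fst, Prod.snd] <;> linarith
    have hchain : ENNReal.ofReal
        (((1/2 : ℝ) * ((Real.sqrt (2*Real.pi*(α^2*(N:ℝ))))⁻¹
            * Real.exp (-(m*(N:ℝ)+1)^2/(2*(α^2*(N:ℝ))))))
          * ((1 : ℝ) * ((Real.sqrt (2*Real.pi*((1-α^2)*(N:ℝ))))⁻¹
            * Real.exp (-(m*(N:ℝ)+1)^2/(2*((1-α^2)*(N:ℝ)))))))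
        ≤ P {ω | X N ω < -(m * N) ∧ |X N ω + Y N ω| ≤ (N : ℝ) ^ ((1 : ℝ) / 2 + γ)} := by
      rw [hprob N, ENNReal.ofReal_mul (by positivity)]
      refine le_trans (mul_le_mul' h1 h2) ?_
      rw [← Measure.prod_prod]
      exact measure_mono hrect
    have h3 := ENNReal.toReal_mono (measure_ne_top P _) hchain
    rwa [ENNReal.toReal_ofReal (hl1pos N hN).le] at h3
  -- upper bound
  have hub : ∀ N : ℕ, 1 ≤ N → (N:ℝ)^((1:ℝ)/2+γ) ≤ m * N →
      (P {ω | X N ω < -(m * N) ∧ |X N ω + Y N ω| ≤ (N : ℝ) ^ ((1 : ℝ) / 2 + γ)}).toReal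
        ≤ Real.exp (-(m*(N:ℝ))^2/(2*(α^2*(N:ℝ))))
          * Real.exp (-(m*(N:ℝ) - (N:ℝ)^((1:ℝ)/2+γ))^2/(2*((1-α^2)*(N:ℝ)))) := by
    intro N hN hr
    have hN0 : (0:ℝ) < N := by exact_mod_cast hN
    have hsub : {p : ℝ × ℝ | p.1 < -(m*(N:ℝ)) ∧ |p.1+p.2| ≤ (N:ℝ)^((1:ℝ)/2+γ)}
        ⊆ (Set.Iio (-(m*(N:ℝ)))) ×ˢ (Set.Ioi (m*(N:ℝ) - (N:ℝ)^((1:ℝ)/2+γ))) := by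
      rintro ⟨x, y⟩ ⟨h1, h2⟩
      have h3 := (abs_le.mp h2).1
      simp only [Set.mem_prod, Set.mem_Iio, Set.mem_Ioi]
      constructor
      · exact h1
      · simp only [Set.mem_setOf_eq] at h1 h3 ⊢
        linarith
    have ht1 := gauss_tail_Iio (w := α^2*(N:ℝ)) (by positivity) (t := m*(N:ℝ)) (by positivity)
    have ht2 := gauss_tail_Ioi (w := (1-α^2)*(N:ℝ)) (by positivity)
        (t := m*(N:ℝ) - (N:ℝ)^((1:ℝ)/2+γ)) (by linarith)
    have hchain : P {ω | X N ω < -(m * N) ∧ |X N ω + Y N ω| ≤ (N : ℝ) ^ ((1 : ℝ) / 2 + γ)}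
        ≤ ENNReal.ofReal (Real.exp (-(m*(N:ℝ))^2/(2*(α^2*(N:ℝ))))
          * Real.exp (-(m*(N:ℝ) - (N:ℝ)^((1:ℝ)/2+γ))^2/(2*((1-α^2)*(N:ℝ))))) := by
      rw [hprob N, ENNReal.ofReal_mul (Real.exp_nonneg _)]
      calc ((gaussianReal 0 (α^2*(N:ℝ)).toNNReal).prod
            (gaussianReal 0 ((1-α^2)*(N:ℝ)).toNNReal))
            {p : ℝ × ℝ | p.1 < -(m*(N:ℝ)) ∧ |p.1+p.2| ≤ (N:ℝ)^((1:ℝ)/2+γ)}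
          ≤ ((gaussianReal 0 (α^2*(N:ℝ)).toNNReal).prod
            (gaussianReal 0 ((1-α^2)*(N:ℝ)).toNNReal))
            ((Set.Iio (-(m*(N:ℝ)))) ×ˢ (Set.Ioi (m*(N:ℝ) - (N:ℝ)^((1:ℝ)/2+γ)))) :=
              measure_mono hsub
        _ = (gaussianReal 0 (α^2*(N:ℝ)).toNNReal (Set.Iio (-(m*(N:ℝ)))))
            * (gaussianReal 0 ((1-α^2)*(N:ℝ)).toNNReal
                (Set.Ioi (m*(N:ℝ) - (N:ℝ)^((1:ℝ)/2+γ)))) := Measure.prod_prod _ _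
        _ ≤ _ := mul_le_mul' ht1 ht2
    have h3 := ENNReal.toReal_mono ENNReal.ofReal_ne_top hchain
    rwa [ENNReal.toReal_ofReal (by positivity)] at h3
  -- eventual domination of r_N by m N
  have hu0 : Tendsto (fun N : ℕ => (N:ℝ)^(γ - 1/2)) atTop (nhds 0) := by
    have h := (tendsto_rpow_neg_atTop (by linarith : (0:ℝ) < 1/2 - γ)).comp
      (tendsto_natCast_atTop_atTop (R := ℝ))
    refine h.congr (fun N => ?_)
    simp only [Function.comp]
    norm_num
  have hev_r : ∀ᶠ N : ℕ in atTop, (N:ℝ)^((1:ℝ)/2+γ) ≤ m * N := by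
    filter_upwards [hu0.eventually_le_const hm, eventually_ge_atTop 1] with N h1 h2
    have hN0 : (0:ℝ) < N := by exact_mod_cast h2
    have key : ((N:ℝ))^((1:ℝ)/2+γ) = (N:ℝ)^(γ - 1/2) * N := by
      rw [show (1:ℝ)/2+γ = (γ - 1/2) + 1 by ring, Real.rpow_add hN0, Real.rpow_one]
    rw [key]
    exact mul_le_mul_of_nonneg_right h1 hN0.le
  -- limits
  have hlower := (lim_lower_piece m (α^2) (1/2) hα2 one_half_pos).add
      (lim_lower_piece m (1-α^2) 1 h1α one_pos)
  have hupper := lim_upper_piece m (α^2) (1-α^2) γ hα2 h1α hγ0 hγ1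
  have hval : -(m^2)/(2*α^2) + -(m^2)/(2*(1-α^2)) = -(m ^ 2) / (2 * α ^ 2 * (1 - α ^ 2)) := by
    field_simp
    ring
  rw [← hval]
  refine tendsto_of_tendsto_of_tendsto_of_le_of_le' hlower hupper ?_ ?_
  · filter_upwards [eventually_ge_atTop 1] with N hN
    have hN0 : (0:ℝ) < N := by exact_mod_cast hN
    have hp1 : (0:ℝ) < (1/2 : ℝ) * ((Real.sqrt (2*Real.pi*(α^2*(N:ℝ))))⁻¹
        * Real.exp (-(m*(N:ℝ)+1)^2/(2*(α^2*(N:ℝ))))) := by positivity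
    have hp2 : (0:ℝ) < (1 : ℝ) * ((Real.sqrt (2*Real.pi*((1-α^2)*(N:ℝ))))⁻¹
        * Real.exp (-(m*(N:ℝ)+1)^2/(2*((1-α^2)*(N:ℝ))))) := by positivity
    calc (1/(N:ℝ)) * Real.log ((1/2 : ℝ) * ((Real.sqrt (2*Real.pi*(α^2*(N:ℝ))))⁻¹
            * Real.exp (-(m*(N:ℝ)+1)^2/(2*(α^2*(N:ℝ))))))
          + (1/(N:ℝ)) * Real.log ((1 : ℝ) * ((Real.sqrt (2*Real.pi*((1-α^2)*(N:ℝ))))⁻¹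
            * Real.exp (-(m*(N:ℝ)+1)^2/(2*((1-α^2)*(N:ℝ))))))
        = (1/(N:ℝ)) * Real.log (((1/2 : ℝ) * ((Real.sqrt (2*Real.pi*(α^2*(N:ℝ))))⁻¹
            * Real.exp (-(m*(N:ℝ)+1)^2/(2*(α^2*(N:ℝ))))))
          * ((1 : ℝ) * ((Real.sqrt (2*Real.pi*((1-α^2)*(N:ℝ))))⁻¹
            * Real.exp (-(m*(N:ℝ)+1)^2/(2*((1-α^2)*(N:ℝ))))))) := by
          rw [Real.log_mul hp1.ne' hp2.ne']; ring
      _ ≤ (1/(N:ℝ)) * Real.log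
          ((P {ω | X N ω < -(m * N) ∧ |X N ω + Y N ω| ≤ (N : ℝ) ^ ((1 : ℝ) / 2 + γ)}).toReal) := by
          refine mul_le_mul_of_nonneg_left ?_ (by positivity)
          exact Real.log_le_log (by positivity) (hlb N hN)
  · filter_upwards [eventually_ge_atTop 1, hev_r] with N hN hrm
    have hN0 : (0:ℝ) < N := by exact_mod_cast hN
    have hppos : (0:ℝ) <
        (P {ω | X N ω < -(m * N) ∧ |X N ω + Y N ω| ≤ (N : ℝ) ^ ((1 : ℝ) / 2 + γ)}).toReal :=
      lt_of_lt_of_le (hl1pos N hN) (hlb N hN)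
    calc (1/(N:ℝ)) * Real.log
          ((P {ω | X N ω < -(m * N) ∧ |X N ω + Y N ω| ≤ (N : ℝ) ^ ((1 : ℝ) / 2 + γ)}).toReal)
        ≤ (1/(N:ℝ)) * Real.log (Real.exp (-(m*(N:ℝ))^2/(2*(α^2*(N:ℝ))))
            * Real.exp (-(m*(N:ℝ) - (N:ℝ)^((1:ℝ)/2+γ))^2/(2*((1-α^2)*(N:ℝ))))) := by
          refine mul_le_mul_of_nonneg_left ?_ (by positivity)
          exact Real.log_le_log hppos (hub N hN hrm)
      _ = (1/(N:ℝ)) * (-(m*(N:ℝ))^2/(2*(α^2*(N:ℝ)))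
            + -(m*(N:ℝ) - (N:ℝ)^((1:ℝ)/2+γ))^2/(2*((1-α^2)*(N:ℝ)))) := by
          rw [← Real.exp_add, Real.log_exp]
end

section
/- For every \alpha \in (0,1), -\alpha\log\alpha - (1-\alpha)\log(1-\alpha) < \frac{(0.57)^2}{2\alpha^2(1-\alpha^2)}. -/
/-- Padé-type upper bound for the logarithm on `(0,1]`. -/
lemma logPade {x : ℝ} (hx : 0 < x) (hx1 : x ≤ 1) :
    Real.log x ≤ 2 * (x - 1) / (x + 1) := by
  set f : ℝ → ℝ := fun t => 2 * (t - 1) / (t + 1) - Real.log t with hf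
  have key : AntitoneOn f (Set.Ioi (0 : ℝ)) := by
    apply antitoneOn_of_hasDerivWithinAt_nonpos (convex_Ioi 0)
      (f' := fun t => 4 / (t + 1) ^ 2 - 1 / t)
    · apply ContinuousOn.sub
      · apply ContinuousOn.div
        · fun_prop
        · fun_prop
        · intro t ht; have : (0:ℝ) < t := ht; positivity
      · exact Real.continuousOn_log.mono (by intro t ht; exact ne_of_gt ht)
    · intro t ht
      rw [interior_Ioi] at ht
      have ht0 : (0 : ℝ) < t := ht
      have h1 : HasDerivAt f (4 / (t + 1) ^ 2 - 1 / t) t := by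
        have hd : HasDerivAt (fun t : ℝ => 2 * (t - 1) / (t + 1)) (4 / (t + 1) ^ 2) t := by
          have := (((hasDerivAt_id t).sub_const 1).const_mul 2).div
            ((hasDerivAt_id t).add_const 1) (by positivity)
          convert this using 1
          · rfl
          · rfl
          · rfl
          · simp only [id]; ring
        have := hd.sub (Real.hasDerivAt_log ht0.ne')
        simp only [one_div] at this ⊢
        exact this
      exact h1.hasDerivWithinAt
    · intro t ht
      rw [interior_Ioi] at ht
      have ht0 : (0 : ℝ) < t := ht
      have : 4 / (t + 1) ^ 2 ≤ 1 / t := by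
        rw [div_le_div_iff₀ (by positivity) ht0]
        nlinarith [sq_nonneg (t - 1)]
      linarith
  have h := key (Set.mem_Ioi.2 hx) (Set.mem_Ioi.2 one_pos) hx1
  simp [hf] at h
  linarith

/-- A stronger Padé-type bound: `-log x ≤ (1-x)(1+5x)/(2x(x+2))` on `(0,1]`,
stated in multiplied-out form. -/
lemma keyB {x : ℝ} (hx : 0 < x) (hx1 : x ≤ 1) :
    0 ≤ (1 - x) * (1 + 5 * x) + 2 * x * (x + 2) * Real.log x := by
  set g : ℝ → ℝ := fun t => (1 - t) * (1 + 5 * t) + 2 * t * (t + 2) * Real.log t with hg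
  have key : AntitoneOn g (Set.Ioc (0 : ℝ) 1) := by
    apply antitoneOn_of_hasDerivWithinAt_nonpos (convex_Ioc 0 1)
      (f' := fun t => 8 - 8 * t + (4 * t + 4) * Real.log t)
    · apply ContinuousOn.add
      · fun_prop
      · apply ContinuousOn.mul
        · fun_prop
        · exact Real.continuousOn_log.mono (by intro t ht; exact ne_of_gt ht.1)
    · intro t ht
      rw [interior_Ioc] at ht
      have ht0 : (0 : ℝ) < t := ht.1
      have h1 : HasDerivAt g (8 - 8 * t + (4 * t + 4) * Real.log t) t := by
        have hp : HasDerivAt (fun t : ℝ => (1 - t) * (1 + 5 * t)) (4 - 10 * t) t := by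
          have := ((hasDerivAt_id t).const_sub 1).mul (((hasDerivAt_id t).const_mul 5).const_add 1)
          convert this using 1; rfl; rfl; rfl; simp [id]; ring
        have hq : HasDerivAt (fun t : ℝ => 2 * t * (t + 2)) (4 * t + 4) t := by
          have := (((hasDerivAt_id t).const_mul 2)).mul ((hasDerivAt_id t).add_const 2)
          convert this using 1; rfl; rfl; rfl; simp [id]; ring
        have := hp.add (hq.mul (Real.hasDerivAt_log ht0.ne'))
        convert this using 1
        · rfl
        · rfl
        · rfl
        · field_simp
          ring
      exact h1.hasDerivWithinAt
    · intro t ht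
      rw [interior_Ioc] at ht
      have ht0 : (0 : ℝ) < t := ht.1
      have hlog := logPade ht0 ht.2.le
      have h2 : (4 * t + 4) * Real.log t ≤ (4 * t + 4) * (2 * (t - 1) / (t + 1)) :=
        mul_le_mul_of_nonneg_left hlog (by linarith)
      have h3 : (4 * t + 4) * (2 * (t - 1) / (t + 1)) = 8 * (t - 1) := by
        field_simp; ring
      rw [h3] at h2
      linarith
  have h := key (Set.mem_Ioc.2 ⟨hx, hx1⟩) (Set.mem_Ioc.2 ⟨one_pos, le_refl 1⟩) hx1
  simp [hg] at h
  nlinarith [h]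

/-- For every `α ∈ (0,1)` the binary entropy satisfies
`I(α) < (0.57)²/(2α²(1-α²))`. -/
theorem entropy_lt_conditioned_rate :
    ∀ α ∈ Set.Ioo (0 : ℝ) 1,
      -α * Real.log α - (1 - α) * Real.log (1 - α) <
        (0.57) ^ 2 / (2 * α ^ 2 * (1 - α ^ 2)) := by
  rintro a ⟨h0, h1⟩
  have ha2 : (0 : ℝ) < 1 - a ^ 2 := by nlinarith
  have hden : (0 : ℝ) < 2 * a ^ 2 * (1 - a ^ 2) := by positivity
  rw [lt_div_iff₀ hden]
  have hB1 := keyB h0 h1.le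
  have hB2 := keyB (x := 1 - a) (by linarith) (by linarith)
  set u := Real.log a with hu
  set v := Real.log (1 - a) with hv
  have s1 : -a * u ≤ (1 - a) * (1 + 5 * a) / (2 * (a + 2)) := by
    rw [le_div_iff₀ (by linarith)]
    nlinarith [hB1]
  have s2 : -(1 - a) * v ≤ a * (6 - 5 * a) / (2 * (3 - a)) := by
    rw [le_div_iff₀ (by linarith)]
    nlinarith [hB2]
  have hsum : -a * u - (1 - a) * v ≤
      (1 - a) * (1 + 5 * a) / (2 * (a + 2)) + a * (6 - 5 * a) / (2 * (3 - a)) := by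
    have := add_le_add s1 s2
    linarith
  have hmul : (-a * u - (1 - a) * v) * (2 * a ^ 2 * (1 - a ^ 2)) ≤
      ((1 - a) * (1 + 5 * a) / (2 * (a + 2)) + a * (6 - 5 * a) / (2 * (3 - a))) *
        (2 * a ^ 2 * (1 - a ^ 2)) :=
    mul_le_mul_of_nonneg_right hsum hden.le
  refine lt_of_le_of_lt hmul ?_
  have hd1 : (2 * (a + 2) : ℝ) ≠ 0 := by positivity
  have hd2 : (2 * (3 - a) : ℝ) ≠ 0 := by
    have : (0:ℝ) < 3 - a := by linarith
    positivity
  rw [div_add_div _ _ hd1 hd2, div_mul_eq_mul_div, div_lt_iff₀ (by nlinarith)]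
  nlinarith [sq_nonneg (a - 0.652), mul_nonneg (sq_nonneg (a - 0.652)) h0.le,
    mul_pos h0 (sub_pos.2 h1), sq_nonneg a, sq_nonneg (1 - a), sq_nonneg (a * (1 - a)),
    mul_pos (mul_pos h0 h0) (sub_pos.2 h1),
    mul_nonneg (mul_nonneg (sq_nonneg (a - 0.652)) h0.le) h0.le]
end
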